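/- Under the same i.i.d. sign-symmetry condition on null W-statistics, with the (non-plus) threshold T = min{ t ∈ {|W_j| : W_j ≠ 0} : #{j : W_j ≤ −t} / max(1, #{j : W_j ≥ t}) ≤ q }, the modified FDR is controlled: E[ #{j ∈ H_0 : W_j ≥ T} / ( #{j : W_j ≥ T} + 1/q ) ] ≤ q. -/

import Mathlib

open MeasureTheory ProbabilityTheory Finset

variable {m : ℕ}

/-- Feasible thresholds for the (non-plus) knockoff filter at level `q`:
nonzero magnitudes `t = |W_j|` with `#{j : W_j ≤ -t} ≤ q · max(1, #{j : W_j ≥ t})`. -/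
noncomputable def knockoffFeasible (q : ℝ) (W : Fin m → ℝ) : Finset ℝ :=
  (Finset.univ.image fun j => |W j|).filter fun t =>
    t ≠ 0 ∧
      (((Finset.univ.filter fun j => W j ≤ -t).card : ℝ)) ≤
        q * max 1 ((Finset.univ.filter fun j => t ≤ W j).card : ℝ)

/-- The knockoff selected set `Ŝ = {j : W_j ≥ T_q}`, empty when no threshold is
feasible (`T_q = +∞`). -/
noncomputable def knockoffSelected (q : ℝ) (W : Fin m → ℝ) : Finset (Fin m) :=
  if h : (knockoffFeasible q W).Nonempty then
    Finset.univ.filter fun j => (knockoffFeasible q W).min' h ≤ W j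
  else ∅


namespace KnockAux

variable {n : ℕ}

/-- number of coordinates `i ≥ s` with `ε i = b` -/
def cnt (ε : Fin n → Bool) (s : ℕ) (b : Bool) : ℕ :=
  (univ.filter fun i : Fin n => s ≤ (i : ℕ) ∧ ε i = b).card

noncomputable def MM (ε : Fin n → Bool) (s : ℕ) : ℝ :=
  (cnt ε s true : ℝ) / (1 + (cnt ε s false : ℝ))

lemma cnt_cast (ε : Fin n → Bool) (s : ℕ) (b : Bool) :
    (cnt ε s b : ℝ) = ∑ i : Fin n, if s ≤ (i : ℕ) ∧ ε i = b then (1:ℝ) else 0 := by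
  rw [cnt, card_filter]
  push_cast
  rfl

lemma cnt_update (ε : Fin n → Bool) (i : Fin n) (b : Bool) (s : ℕ) (c : Bool) :
    (cnt (Function.update ε i b) s c : ℝ) =
      (cnt ε s c : ℝ) + (if s ≤ (i:ℕ) ∧ b = c then (1:ℝ) else 0)
        - (if s ≤ (i:ℕ) ∧ ε i = c then (1:ℝ) else 0) := by
  rw [cnt_cast, cnt_cast]
  rw [← Finset.sum_erase_add _ _ (mem_univ i), ← Finset.sum_erase_add _ _ (mem_univ i)]
  have h1 : ∀ j ∈ univ.erase i,
      (if s ≤ (j:ℕ) ∧ Function.update ε i b j = c then (1:ℝ) else 0)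
        = (if s ≤ (j:ℕ) ∧ ε j = c then (1:ℝ) else 0) := by
    intro j hj
    rw [Function.update_of_ne (mem_erase.1 hj).1]
  rw [Finset.sum_congr rfl h1, Function.update_self]
  ring

lemma cnt_ge (ε : Fin n → Bool) (b : Bool) (s : ℕ) (hs : n ≤ s) : cnt ε s b = 0 := by
  rw [cnt, card_eq_zero, filter_eq_empty_iff]
  intro i _
  exact fun h => absurd (le_trans hs h.1) (not_le.2 i.isLt)

lemma cnt_le (ε : Fin n → Bool) (b : Bool) (s : ℕ) : cnt ε s b ≤ n := by
  unfold cnt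
  simpa using card_le_card (filter_subset _ (univ : Finset (Fin n)))

lemma cnt_succ (ε : Fin n → Bool) (s : ℕ) (hs : s < n) (c : Bool) :
    (cnt ε s c : ℝ) = (if ε ⟨s, hs⟩ = c then (1:ℝ) else 0) + (cnt ε (s+1) c : ℝ) := by
  rw [cnt_cast, cnt_cast]
  rw [← Finset.sum_erase_add _ _ (mem_univ (⟨s, hs⟩ : Fin n)),
    ← Finset.sum_erase_add _ _ (mem_univ (⟨s, hs⟩ : Fin n))]
  have h1 : ∀ j ∈ univ.erase (⟨s, hs⟩ : Fin n),
      (if s ≤ (j:ℕ) ∧ ε j = c then (1:ℝ) else 0)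
        = (if s + 1 ≤ (j:ℕ) ∧ ε j = c then (1:ℝ) else 0) := by
    intro j hj
    have hne : (j:ℕ) ≠ s := fun h => (mem_erase.1 hj).1 (Fin.ext h)
    congr 1
    simp only [eq_iff_iff]
    constructor
    · rintro ⟨h1, h2⟩; exact ⟨lt_of_le_of_ne h1 (Ne.symm hne), h2⟩
    · rintro ⟨h1, h2⟩; exact ⟨le_of_lt h1, h2⟩
  rw [Finset.sum_congr rfl h1]
  have hns : ¬ (s + 1 ≤ s) := by omega
  simp only [Fin.val_mk, le_refl, true_and, hns, false_and, if_false]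
  ring

lemma MM_nonneg (ε : Fin n → Bool) (s : ℕ) : 0 ≤ MM ε s := by
  apply div_nonneg (by positivity) (by positivity)

/-- Base case: the expected initial value of the ratio is at most `2^n`. -/
lemma base_le : ∑ ε : Fin n → Bool, MM ε 0 ≤ (2:ℝ) ^ n := by
  classical
  -- rewrite each term: cnt true * (1/(1+cnt false)) as a sum over true coordinates
  have key : ∑ ε : Fin n → Bool, MM ε 0
      = ∑ x ∈ (univ : Finset (Fin n → Bool)).sigma
          (fun ε => univ.filter fun i : Fin n => ε i = true),
          (1 + (cnt x.1 0 false : ℝ))⁻¹ := by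
    rw [Finset.sum_sigma]
    refine Finset.sum_congr rfl fun ε _ => ?_
    dsimp only
    rw [Finset.sum_const]
    have hc : (univ.filter fun i : Fin n => ε i = true).card = cnt ε 0 true := by
      rw [cnt]; congr 1; ext i; simp
    rw [hc, MM, div_eq_mul_inv, nsmul_eq_mul, mul_comm]
  rw [key]
  have key2 : ∑ x ∈ (univ : Finset (Fin n → Bool)).sigma
          (fun ε => univ.filter fun i : Fin n => ε i = true),
          (1 + (cnt x.1 0 false : ℝ))⁻¹
      = ∑ x ∈ (univ : Finset (Fin n → Bool)).sigma
          (fun ε => univ.filter fun i : Fin n => ε i = false),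
          ((cnt x.1 0 false : ℝ))⁻¹ := by
    refine Finset.sum_nbij' (fun x => ⟨Function.update x.1 x.2 false, x.2⟩)
      (fun x => ⟨Function.update x.1 x.2 true, x.2⟩) ?_ ?_ ?_ ?_ ?_
    · rintro ⟨ε, i⟩ hx
      simp only [mem_sigma, mem_univ, mem_filter, true_and] at hx ⊢
      simp [Function.update_self]
    · rintro ⟨ε, i⟩ hx
      simp only [mem_sigma, mem_univ, mem_filter, true_and] at hx ⊢
      simp [Function.update_self]
    · rintro ⟨ε, i⟩ hx
      simp only [mem_sigma, mem_univ, mem_filter, true_and] at hx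
      simp [Function.update_idem, Function.update_eq_self_iff, hx]
    · rintro ⟨ε, i⟩ hx
      simp only [mem_sigma, mem_univ, mem_filter, true_and] at hx
      simp [Function.update_idem, Function.update_eq_self_iff, hx]
    · rintro ⟨ε, i⟩ hx
      simp only [mem_sigma, mem_univ, mem_filter, true_and] at hx
      have := cnt_update ε i false 0 false
      simp only [hx] at this
      norm_num at this
      dsimp only
      rw [this]
      ring_nf
  rw [key2, Finset.sum_sigma]
  dsimp only
  calc ∑ ε : Fin n → Bool, ∑ _i ∈ univ.filter fun i : Fin n => ε i = false,
        ((cnt ε 0 false : ℝ))⁻¹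
      ≤ ∑ ε : Fin n → Bool, (1:ℝ) := by
        refine Finset.sum_le_sum fun ε _ => ?_
        rw [Finset.sum_const, nsmul_eq_mul]
        have hc : (univ.filter fun i : Fin n => ε i = false).card = cnt ε 0 false := by
          rw [cnt]; congr 1; ext i; simp
        rw [hc]
        rcases Nat.eq_zero_or_pos (cnt ε 0 false) with h | h
        · simp [h]
        · rw [mul_inv_cancel₀ (by positivity)]
    _ = (2:ℝ)^n := by
        rw [Finset.sum_const, nsmul_eq_mul, mul_one]
        simp [Fintype.card_fun]


lemma step_le (σ : (Fin n → Bool) → ℕ) {s : ℕ} (hs : s < n)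
    (had : ∀ ε ε' : Fin n → Bool, (∀ i : Fin n, (i:ℕ) < s → ε i = ε' i) →
      cnt ε s true = cnt ε' s true → (s < σ ε ↔ s < σ ε')) :
    ∑ ε ∈ (univ : Finset (Fin n → Bool)).filter (fun ε => s < σ ε), MM ε (s+1)
      ≤ ∑ ε ∈ (univ : Finset (Fin n → Bool)).filter (fun ε => s < σ ε), MM ε s := by
  classical
  set i₀ : Fin n := ⟨s, hs⟩ with hi₀
  set A : Finset (Fin n → Bool) := univ.filter (fun ε => s < σ ε) with hA
  -- split into ε i₀ = true / false
  rw [← Finset.sum_filter_add_sum_filter_not A (fun ε => ε i₀ = true) (MM · (s+1)),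
      ← Finset.sum_filter_add_sum_filter_not A (fun ε => ε i₀ = true) (MM · s)]
  set A₁ := A.filter (fun ε => ε i₀ = true) with hA₁
  set A₀ := A.filter (fun ε => ¬ ε i₀ = true) with hA₀
  -- difference formulas
  have h1 : ∀ ε ∈ A₁, MM ε (s+1) = MM ε s - 1 / (1 + (cnt ε (s+1) false : ℝ)) := by
    intro ε hε
    have hεi : ε i₀ = true := (mem_filter.1 hε).2
    have ht := cnt_succ ε s hs true
    have hf := cnt_succ ε s hs false
    rw [hεi] at ht hf
    simp only [if_true, if_false, reduceCtorEq] at ht hf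
    have hd : (0:ℝ) < 1 + (cnt ε (s+1) false : ℝ) := by positivity
    rw [MM, MM, ht, hf]
    rw [zero_add]
    field_simp
    try ring
  have h0 : ∀ ε ∈ A₀, MM ε (s+1) = MM ε s +
      (cnt ε (s+1) true : ℝ) / ((1 + (cnt ε (s+1) false : ℝ)) * (2 + (cnt ε (s+1) false : ℝ))) := by
    intro ε hε
    have hεi : ε i₀ = false := by
      have := (mem_filter.1 hε).2; simpa using this
    have ht := cnt_succ ε s hs true
    have hf := cnt_succ ε s hs false
    rw [hεi] at ht hf
    simp only [if_true, if_false, reduceCtorEq] at ht hf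
    rw [MM, MM, ht, hf, zero_add]
    have hd : (0:ℝ) < 1 + (cnt ε (s+1) false : ℝ) := by positivity
    have hd2 : (0:ℝ) < 2 + (cnt ε (s+1) false : ℝ) := by positivity
    rw [show (1:ℝ) + (1 + (cnt ε (s+1) false : ℝ)) = 2 + (cnt ε (s+1) false : ℝ) by ring]
    field_simp
    ring
  rw [Finset.sum_congr rfl h1, Finset.sum_congr rfl h0, Finset.sum_add_distrib,
    Finset.sum_sub_distrib]
  -- suffices: sum over A₀ of increments ≤ sum over A₁ of decrements
  have key : ∑ ε ∈ A₀, (cnt ε (s+1) true : ℝ) /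
        ((1 + (cnt ε (s+1) false : ℝ)) * (2 + (cnt ε (s+1) false : ℝ)))
      ≤ ∑ ε ∈ A₁, 1 / (1 + (cnt ε (s+1) false : ℝ)) := by
    have expand : ∑ ε ∈ A₀, (cnt ε (s+1) true : ℝ) /
          ((1 + (cnt ε (s+1) false : ℝ)) * (2 + (cnt ε (s+1) false : ℝ)))
        = ∑ x ∈ A₀.sigma (fun ε => univ.filter fun i : Fin n => s+1 ≤ (i:ℕ) ∧ ε i = true),
            (((1 + (cnt x.1 (s+1) false : ℝ)) * (2 + (cnt x.1 (s+1) false : ℝ))))⁻¹ := by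
      rw [Finset.sum_sigma]
      refine Finset.sum_congr rfl fun ε _ => ?_
      dsimp only
      rw [Finset.sum_const, nsmul_eq_mul]
      rw [div_eq_mul_inv]
      congr 1
    have expand2 : ∑ x ∈ A₁.sigma (fun ε => univ.filter fun i : Fin n => s+1 ≤ (i:ℕ) ∧ ε i = false),
            ((((cnt x.1 (s+1) false : ℝ)) * (1 + (cnt x.1 (s+1) false : ℝ))))⁻¹
        = ∑ ε ∈ A₁, (cnt ε (s+1) false : ℝ) * (((cnt ε (s+1) false : ℝ)) * (1 + (cnt ε (s+1) false : ℝ)))⁻¹ := by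
      rw [Finset.sum_sigma]
      refine Finset.sum_congr rfl fun ε _ => ?_
      dsimp only
      rw [Finset.sum_const, nsmul_eq_mul]
      congr 1
    -- the swap bijection
    have bij : ∑ x ∈ A₀.sigma (fun ε => univ.filter fun i : Fin n => s+1 ≤ (i:ℕ) ∧ ε i = true),
            (((1 + (cnt x.1 (s+1) false : ℝ)) * (2 + (cnt x.1 (s+1) false : ℝ))))⁻¹
        = ∑ x ∈ A₁.sigma (fun ε => univ.filter fun i : Fin n => s+1 ≤ (i:ℕ) ∧ ε i = false),
            ((((cnt x.1 (s+1) false : ℝ)) * (1 + (cnt x.1 (s+1) false : ℝ))))⁻¹ := by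
      refine Finset.sum_nbij'
        (fun x => ⟨Function.update (Function.update x.1 i₀ true) x.2 false, x.2⟩)
        (fun x => ⟨Function.update (Function.update x.1 i₀ false) x.2 true, x.2⟩)
        ?_ ?_ ?_ ?_ ?_
      · rintro ⟨ε, i⟩ hx
        simp only [mem_sigma, mem_filter, mem_univ, true_and, hA₀, hA₁, hA] at hx ⊢
        obtain ⟨⟨hσε, hεi₀⟩, hsi, hεi⟩ := hx
        have hεi₀' : ε i₀ = false := by simpa using hεi₀
        have hii₀ : i ≠ i₀ := by
          intro h; rw [h] at hsi; simp only [hi₀] at hsi; omega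
        set ε' := Function.update (Function.update ε i₀ true) i false with hε'
        have he1 : ε' i₀ = true := by
          rw [hε', Function.update_of_ne (Ne.symm hii₀), Function.update_self]
        have he2 : ε' i = false := by rw [hε', Function.update_self]
        have hcnt : cnt ε s true = cnt ε' s true := by
          have c1 := cnt_update (Function.update ε i₀ true) i false s true
          have c2 := cnt_update ε i₀ true s true
          have hb : (Function.update ε i₀ true) i = true := by
            rw [Function.update_of_ne hii₀]; exact hεi
          rw [hb] at c1
          have hsi' : s ≤ (i:ℕ) := by omega
          have hsi₀ : s ≤ (i₀:ℕ) := by simp [hi₀]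
          simp only [hsi', hsi₀, hεi₀', true_and, if_true, if_false, reduceCtorEq] at c1 c2
          have : (cnt ε' s true : ℝ) = (cnt ε s true : ℝ) := by
            rw [hε', c1, c2]; ring
          exact_mod_cast this.symm
        have hσ' : s < σ ε' := by
          rw [← had ε ε' ?_ hcnt]
          · exact hσε
          · intro k hk
            rw [hε', Function.update_of_ne, Function.update_of_ne]
            · intro h; rw [h] at hk; simp [hi₀] at hk
            · intro h; rw [h] at hk; omega
        exact ⟨⟨hσ', he1⟩, hsi, he2⟩
      · rintro ⟨ε, i⟩ hx
        simp only [mem_sigma, mem_filter, mem_univ, true_and, hA₀, hA₁, hA] at hx ⊢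
        obtain ⟨⟨hσε, hεi₀⟩, hsi, hεi⟩ := hx
        have hii₀ : i ≠ i₀ := by
          intro h; rw [h] at hsi; simp only [hi₀] at hsi; omega
        set ε' := Function.update (Function.update ε i₀ false) i true with hε'
        have he1 : ε' i₀ = false := by
          rw [hε', Function.update_of_ne (Ne.symm hii₀), Function.update_self]
        have he2 : ε' i = true := by rw [hε', Function.update_self]
        have hcnt : cnt ε s true = cnt ε' s true := by
          have c1 := cnt_update (Function.update ε i₀ false) i true s true
          have c2 := cnt_update ε i₀ false s true
          have hb : (Function.update ε i₀ false) i = false := by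
            rw [Function.update_of_ne hii₀]; exact hεi
          rw [hb] at c1
          have hsi' : s ≤ (i:ℕ) := by omega
          have hsi₀ : s ≤ (i₀:ℕ) := by simp [hi₀]
          simp only [hsi', hsi₀, hεi₀, true_and, if_true, if_false, reduceCtorEq] at c1 c2
          have : (cnt ε' s true : ℝ) = (cnt ε s true : ℝ) := by
            rw [hε', c1, c2]; ring
          exact_mod_cast this.symm
        have hσ' : s < σ ε' := by
          rw [← had ε ε' ?_ hcnt]
          · exact hσε
          · intro k hk
            rw [hε', Function.update_of_ne, Function.update_of_ne]
            · intro h; rw [h] at hk; simp [hi₀] at hk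
            · intro h; rw [h] at hk; omega
        exact ⟨⟨hσ', by simp [he1]⟩, hsi, he2⟩
      · rintro ⟨ε, i⟩ hx
        simp only [mem_sigma, mem_filter, mem_univ, true_and, hA₀, hA₁, hA] at hx
        obtain ⟨⟨hσε, hεi₀⟩, hsi, hεi⟩ := hx
        have hεi₀' : ε i₀ = false := by simpa using hεi₀
        have hii₀ : i ≠ i₀ := by
          intro h; rw [h] at hsi; simp only [hi₀] at hsi; omega
        have hupd : Function.update (Function.update (Function.update
            (Function.update ε i₀ true) i false) i₀ false) i true = ε := by
          funext j
          by_cases hj : j = i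
          · subst hj; simp [Function.update_self, hεi]
          · by_cases hj₀ : j = i₀
            · subst hj₀
              rw [Function.update_of_ne hj, Function.update_self, hεi₀']
            · rw [Function.update_of_ne hj, Function.update_of_ne hj₀,
                Function.update_of_ne hj, Function.update_of_ne hj₀]
        dsimp only
        rw [hupd]
      · rintro ⟨ε, i⟩ hx
        simp only [mem_sigma, mem_filter, mem_univ, true_and, hA₀, hA₁, hA] at hx
        obtain ⟨⟨hσε, hεi₀⟩, hsi, hεi⟩ := hx
        have hii₀ : i ≠ i₀ := by
          intro h; rw [h] at hsi; simp only [hi₀] at hsi; omega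
        have hupd : Function.update (Function.update (Function.update
            (Function.update ε i₀ false) i true) i₀ true) i false = ε := by
          funext j
          by_cases hj : j = i
          · subst hj; simp [Function.update_self, hεi]
          · by_cases hj₀ : j = i₀
            · subst hj₀
              rw [Function.update_of_ne hj, Function.update_self, hεi₀]
            · rw [Function.update_of_ne hj, Function.update_of_ne hj₀,
                Function.update_of_ne hj, Function.update_of_ne hj₀]
        dsimp only
        rw [hupd]
      · rintro ⟨ε, i⟩ hx
        simp only [mem_sigma, mem_filter, mem_univ, true_and, hA₀, hA₁, hA] at hx
        obtain ⟨⟨hσε, hεi₀⟩, hsi, hεi⟩ := hx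
        have hεi₀' : ε i₀ = false := by simpa using hεi₀
        have hii₀ : i ≠ i₀ := by
          intro h; rw [h] at hsi; simp only [hi₀] at hsi; omega
        dsimp only
        have hcf : (cnt (Function.update (Function.update ε i₀ true) i false) (s+1) false : ℝ)
            = (cnt ε (s+1) false : ℝ) + 1 := by
          have c1 := cnt_update (Function.update ε i₀ true) i false (s+1) false
          have c2 := cnt_update ε i₀ true (s+1) false
          have hb : (Function.update ε i₀ true) i = true := by
            rw [Function.update_of_ne hii₀]; exact hεi
          rw [hb] at c1
          have hns : ¬ (s + 1 ≤ (i₀:ℕ)) := by simp [hi₀]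
          simp only [hsi, hns, true_and, false_and, if_true, if_false, reduceCtorEq] at c1 c2
          rw [c1, c2]; ring
        rw [hcf]
        congr 1
        ring
    rw [expand, bij, expand2]
    refine Finset.sum_le_sum fun ε _ => ?_
    rcases Nat.eq_zero_or_pos (cnt ε (s+1) false) with h | h
    · simp [h]
    · have h0 : (0:ℝ) < (cnt ε (s+1) false : ℝ) := by exact_mod_cast h
      rw [mul_inv, ← mul_assoc, mul_inv_cancel₀ (ne_of_gt h0), one_mul, one_div]
  linarith [key]

theorem lemA (σ : (Fin n → Bool) → ℕ) (hσ : ∀ ε, σ ε ≤ n)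
    (had : ∀ s : ℕ, s < n → ∀ ε ε' : Fin n → Bool, (∀ i : Fin n, (i:ℕ) < s → ε i = ε' i) →
      cnt ε s true = cnt ε' s true → (σ ε ≤ s ↔ σ ε' ≤ s)) :
    ∑ ε : Fin n → Bool, MM ε (σ ε) ≤ (2:ℝ) ^ n := by
  classical
  have main : ∀ s : ℕ, s ≤ n →
      ∑ ε : Fin n → Bool, MM ε (min (σ ε) s) ≤ ∑ ε : Fin n → Bool, MM ε 0 := by
    intro s
    induction s with
    | zero => intro _; simp
    | succ s ih =>
      intro hsn
      have hs : s < n := hsn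
      refine le_trans ?_ (ih (le_of_lt hs))
      rw [← Finset.sum_filter_add_sum_filter_not (univ : Finset (Fin n → Bool))
          (fun ε => s < σ ε) (fun ε => MM ε (min (σ ε) (s+1))),
        ← Finset.sum_filter_add_sum_filter_not (univ : Finset (Fin n → Bool))
          (fun ε => s < σ ε) (fun ε => MM ε (min (σ ε) s))]
      have e1 : ∀ ε ∈ (univ : Finset (Fin n → Bool)).filter (fun ε => s < σ ε),
          MM ε (min (σ ε) (s+1)) = MM ε (s+1) := by
        intro ε hε
        have : s < σ ε := (mem_filter.1 hε).2
        rw [min_eq_right (by omega)]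
      have e2 : ∀ ε ∈ (univ : Finset (Fin n → Bool)).filter (fun ε => s < σ ε),
          MM ε (min (σ ε) s) = MM ε s := by
        intro ε hε
        have : s < σ ε := (mem_filter.1 hε).2
        rw [min_eq_right (by omega)]
      have e3 : ∀ ε ∈ (univ : Finset (Fin n → Bool)).filter (fun ε => ¬ s < σ ε),
          MM ε (min (σ ε) (s+1)) = MM ε (min (σ ε) s) := by
        intro ε hε
        have : ¬ s < σ ε := (mem_filter.1 hε).2
        rw [min_eq_left (by omega), min_eq_left (by omega)]
      rw [Finset.sum_congr rfl e1, Finset.sum_congr rfl e2, Finset.sum_congr rfl e3]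
      have hadapt : ∀ ε ε' : Fin n → Bool, (∀ i : Fin n, (i:ℕ) < s → ε i = ε' i) →
          cnt ε s true = cnt ε' s true → (s < σ ε ↔ s < σ ε') := by
        intro ε ε' hag hc
        have := had s hs ε ε' hag hc
        omega
      have := step_le σ hs hadapt
      linarith
  have hfin : ∀ ε : Fin n → Bool, MM ε (min (σ ε) n) = MM ε (σ ε) := by
    intro ε; rw [min_eq_left (hσ ε)]
  calc ∑ ε : Fin n → Bool, MM ε (σ ε)
      = ∑ ε : Fin n → Bool, MM ε (min (σ ε) n) := by
        exact (Finset.sum_congr rfl fun ε _ => hfin ε).symm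
    _ ≤ ∑ ε : Fin n → Bool, MM ε 0 := main n le_rfl
    _ ≤ (2:ℝ)^n := base_le


/-- flip the signs of the coordinates in `S` -/
noncomputable def flipV (S : Finset (Fin m)) (v : Fin m → ℝ) : Fin m → ℝ :=
  fun j => (if j ∈ S then (-1:ℝ) else 1) * v j

open Classical in
/-- the (modified-FDP related) supermartingale payoff function -/
noncomputable def gaux (q : ℝ) (H0 : Finset (Fin m)) (v : Fin m → ℝ) : ℝ :=
  ((knockoffSelected q v ∩ H0).card : ℝ) /
    (1 + ((H0.filter fun j => ∃ t ∈ knockoffFeasible q v, v j ≤ -t).card : ℝ))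

open Classical in
/-- the flip-set associated to a boolean sign pattern on the ordered null coordinates -/
noncomputable def Sof (w : Fin m → ℝ) {c : ℕ} (ord : Fin c → Fin m) (ε : Fin c → Bool) :
    Finset (Fin m) :=
  (univ.filter fun i =>
    if w (ord i) = 0 then ε i = true else ¬ (ε i = decide (0 < w (ord i)))).image ord

noncomputable def Vof (w : Fin m → ℝ) {c : ℕ} (ord : Fin c → Fin m) (ε : Fin c → Bool) :
    Fin m → ℝ := flipV (Sof w ord ε) w


section Basic
variable {q : ℝ} {H0 : Finset (Fin m)} {w : Fin m → ℝ} {c : ℕ} {ord : Fin c → Fin m}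

lemma mem_feasible_iff {t : ℝ} {v : Fin m → ℝ} :
    t ∈ knockoffFeasible q v ↔ (∃ j, |v j| = t) ∧ t ≠ 0 ∧
      (((Finset.univ.filter fun j => v j ≤ -t).card : ℝ)) ≤
        q * max 1 ((Finset.univ.filter fun j => t ≤ v j).card : ℝ) := by
  simp only [knockoffFeasible, mem_filter, mem_image, mem_univ, true_and, and_assoc]

lemma feasible_pos {t : ℝ} {v : Fin m → ℝ} (h : t ∈ knockoffFeasible q v) : 0 < t := by
  obtain ⟨⟨j, hj⟩, h0, _⟩ := mem_feasible_iff.1 h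
  have hnn := abs_nonneg (v j)
  rw [hj] at hnn
  rcases hnn.lt_or_eq with h' | h'
  · exact h'
  · exact absurd h'.symm h0

lemma Vof_abs (ε : Fin c → Bool) (j : Fin m) : |Vof w ord ε j| = |w j| := by
  unfold Vof flipV
  split <;> simp

lemma Vof_zero (ε : Fin c → Bool) {j : Fin m} (hj : w j = 0) : Vof w ord ε j = w j := by
  unfold Vof flipV
  rw [hj]; split <;> ring

lemma Vof_notmem (ε : Fin c → Bool) {j : Fin m} (hj : ∀ i, ord i ≠ j) : Vof w ord ε j = w j := by
  unfold Vof flipV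
  rw [if_neg, one_mul]
  intro hmem
  obtain ⟨i, _, hi⟩ := Finset.mem_image.1 hmem
  exact hj i hi

lemma Vof_ord (hinj : Function.Injective ord) (ε : Fin c → Bool) {i : Fin c}
    (hw : w (ord i) ≠ 0) :
    Vof w ord ε (ord i) = if ε i then |w (ord i)| else -|w (ord i)| := by
  classical
  have hmem : ord i ∈ Sof w ord ε ↔ ¬ (ε i = decide (0 < w (ord i))) := by
    unfold Sof
    constructor
    · intro h
      obtain ⟨i', hi', h2⟩ := Finset.mem_image.1 h
      rcases Finset.mem_filter.1 hi' with ⟨_, hcond⟩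
      have : i' = i := hinj h2
      subst this
      rwa [if_neg hw] at hcond
    · intro h
      refine Finset.mem_image.2 ⟨i, Finset.mem_filter.2 ⟨mem_univ _, ?_⟩, rfl⟩
      rwa [if_neg hw]
  have hval : Vof w ord ε (ord i)
      = (if ord i ∈ Sof w ord ε then (-1:ℝ) else 1) * w (ord i) := rfl
  rw [hval]
  rcases lt_trichotomy (w (ord i)) 0 with hlt | heq | hgt
  · have hd : decide (0 < w (ord i)) = false := by
      simp [not_lt.2 (le_of_lt hlt)]
    rw [hd] at hmem
    rw [abs_of_neg hlt]
    cases hε : ε i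
    · have hnm : ord i ∉ Sof w ord ε := by rw [hmem]; simp [hε]
      rw [if_neg hnm, one_mul, if_neg (by simp), neg_neg]
    · have hm : ord i ∈ Sof w ord ε := by rw [hmem]; simp [hε]
      rw [if_pos hm, if_pos rfl]; ring
  · exact absurd heq hw
  · have hd : decide (0 < w (ord i)) = true := by simp [hgt]
    rw [hd] at hmem
    rw [abs_of_pos hgt]
    cases hε : ε i
    · have hm : ord i ∈ Sof w ord ε := by rw [hmem]; simp [hε]
      rw [if_pos hm, if_neg (by simp)]; ring
    · have hnm : ord i ∉ Sof w ord ε := by rw [hmem]; simp [hε]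
      rw [if_neg hnm, one_mul, if_pos rfl]

lemma Vof_ord_ge (hinj : Function.Injective ord) (ε : Fin c → Bool) {i : Fin c} {t : ℝ}
    (ht : 0 < t) : t ≤ Vof w ord ε (ord i) ↔ (t ≤ |w (ord i)| ∧ ε i = true) := by
  by_cases hw : w (ord i) = 0
  · rw [Vof_zero ε hw, hw]
    simp only [abs_zero]
    constructor
    · intro h; linarith
    · rintro ⟨h, _⟩; linarith
  · rw [Vof_ord hinj ε hw]
    have habs : 0 < |w (ord i)| := abs_pos.2 hw
    cases hε : ε i
    · simp only [Bool.false_eq_true, if_false, and_false, iff_false]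
      intro h; linarith
    · simp only [if_true, and_true]

lemma Vof_ord_le (hinj : Function.Injective ord) (ε : Fin c → Bool) {i : Fin c} {t : ℝ}
    (ht : 0 < t) : Vof w ord ε (ord i) ≤ -t ↔ (t ≤ |w (ord i)| ∧ ε i = false) := by
  by_cases hw : w (ord i) = 0
  · rw [Vof_zero ε hw, hw]
    simp only [abs_zero]
    constructor
    · intro h; linarith
    · rintro ⟨h, _⟩; linarith
  · rw [Vof_ord hinj ε hw]
    have habs : 0 < |w (ord i)| := abs_pos.2 hw
    cases hε : ε i
    · simp only [Bool.false_eq_true, if_false, and_true]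
      constructor
      · intro h; linarith
      · intro h; linarith
    · simp only [if_true, Bool.true_eq_false, and_false, iff_false]
      intro h; linarith

end Basic

open Classical in
noncomputable def εof (w : Fin m → ℝ) {c : ℕ} (ord : Fin c → Fin m) (S : Finset (Fin m)) :
    Fin c → Bool :=
  fun i => if w (ord i) = 0 then decide (ord i ∈ S)
    else (if ord i ∈ S then ! decide (0 < w (ord i)) else decide (0 < w (ord i)))

section Main
variable {q : ℝ} {H0 : Finset (Fin m)} {w : Fin m → ℝ} {c : ℕ} {ord : Fin c → Fin m}

lemma Sof_subset (himg : H0 = univ.image ord) (ε : Fin c → Bool) : Sof w ord ε ⊆ H0 := by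
  classical
  rw [himg]
  exact Finset.image_subset_image (Finset.filter_subset _ _) |>.trans (le_refl _)

lemma Sof_εof (hinj : Function.Injective ord) (himg : H0 = univ.image ord)
    {S : Finset (Fin m)} (hS : S ⊆ H0) : Sof w ord (εof w ord S) = S := by
  classical
  ext j
  unfold Sof
  simp only [Finset.mem_image, mem_filter, mem_univ, true_and]
  constructor
  · rintro ⟨i, hcond, rfl⟩
    by_cases hw : w (ord i) = 0
    · simp only [εof, hw, if_true, if_pos] at hcond
      simpa using hcond
    · simp only [εof, hw, if_neg hw] at hcond
      by_cases hm : ord i ∈ S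
      · exact hm
      · rw [if_neg hm] at hcond
        exact absurd rfl hcond
  · intro hj
    have hjH : j ∈ H0 := hS hj
    rw [himg] at hjH
    obtain ⟨i, _, rfl⟩ := Finset.mem_image.1 hjH
    refine ⟨i, ?_, rfl⟩
    by_cases hw : w (ord i) = 0
    · simp [εof, hw, hj]
    · simp [εof, hw, hj]

lemma εof_Sof (hinj : Function.Injective ord) (ε : Fin c → Bool) :
    εof w ord (Sof w ord ε) = ε := by
  classical
  funext i
  have hmem : ord i ∈ Sof w ord ε ↔
      (if w (ord i) = 0 then ε i = true else ¬ (ε i = decide (0 < w (ord i)))) := by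
    unfold Sof
    constructor
    · intro h
      obtain ⟨i', hi', h2⟩ := Finset.mem_image.1 h
      cases hinj h2
      exact (mem_filter.1 hi').2
    · intro h
      exact Finset.mem_image.2 ⟨i, mem_filter.2 ⟨mem_univ _, h⟩, rfl⟩
  unfold εof
  by_cases hw : w (ord i) = 0
  · rw [if_pos hw]
    rw [if_pos hw] at hmem
    cases hε : ε i
    · simp [hmem, hε]
    · simp [hmem, hε]
  · rw [if_neg hw]
    rw [if_neg hw] at hmem
    by_cases hm : ord i ∈ Sof w ord ε
    · rw [if_pos hm]
      have := hmem.1 hm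
      cases hd : decide (0 < w (ord i)) <;> cases hε : ε i <;> simp_all
    · rw [if_neg hm]
      have : ε i = decide (0 < w (ord i)) := by
        by_contra hne
        exact hm (hmem.2 hne)
      exact this.symm

lemma lower_char {n : ℕ} (S : Finset (Fin n))
    (hlow : ∀ i j : Fin n, i ≤ j → j ∈ S → i ∈ S) (i : Fin n) :
    i ∈ S ↔ (i : ℕ) < S.card := by
  constructor
  · intro hi
    have hsub : Finset.Iic i ⊆ S := fun k hk => hlow k i (Finset.mem_Iic.1 hk) hi
    have hcard := Finset.card_le_card hsub
    rw [Fin.card_Iic] at hcard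
    omega
  · intro hi
    by_contra hni
    have hsub : S ⊆ Finset.Iio i := by
      intro k hk
      rw [Finset.mem_Iio]
      by_contra hki
      exact hni (hlow i k (not_lt.1 hki) hk)
    have hcard := Finset.card_le_card hsub
    rw [Fin.card_Iio] at hcard
    omega

open Classical in
lemma card_split_H0 (hinj : Function.Injective ord) (himg : H0 = univ.image ord)
    (P : Fin m → Prop) :
    (H0.filter P).card = (univ.filter fun i : Fin c => P (ord i)).card := by
  rw [himg, Finset.filter_image, Finset.card_image_of_injective _ hinj]

open Classical in
lemma card_split (hinj : Function.Injective ord) (himg : H0 = univ.image ord)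
    (P : Fin m → Prop) :
    ((univ : Finset (Fin m)).filter P).card
      = ((univ : Finset (Fin m)).filter fun j => j ∉ H0 ∧ P j).card
        + (univ.filter fun i : Fin c => P (ord i)).card := by
  have h1 : ((univ : Finset (Fin m)).filter P)
      = ((univ : Finset (Fin m)).filter fun j => j ∉ H0 ∧ P j) ∪ (H0.filter P) := by
    ext j
    by_cases hj : j ∈ H0 <;> simp [hj]
  have hdisj : Disjoint ((univ : Finset (Fin m)).filter fun j => j ∉ H0 ∧ P j)
      (H0.filter P) := by
    rw [Finset.disjoint_left]
    intro a ha hb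
    exact (mem_filter.1 ha).2.1 (mem_filter.1 hb).1
  rw [h1, Finset.card_union_of_disjoint hdisj, ← card_split_H0 hinj himg]

end Main


/-- the deterministic comparison: modified FDP is at most `q` times the payoff -/
lemma det_le {q : ℝ} (hq0 : 0 < q) (hq1 : q < 1) (H0 : Finset (Fin m)) (v : Fin m → ℝ) :
    ((knockoffSelected q v ∩ H0).card : ℝ) / (((knockoffSelected q v).card : ℝ) + 1/q)
      ≤ q * gaux q H0 v := by
  classical
  have hq' : (0:ℝ) < 1/q := by positivity
  by_cases h : (knockoffFeasible q v).Nonempty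
  · set T := (knockoffFeasible q v).min' h with hT
    have hTmem : T ∈ knockoffFeasible q v := Finset.min'_mem _ h
    obtain ⟨_, _, hcond⟩ := mem_feasible_iff.1 hTmem
    have hsel : knockoffSelected q v = univ.filter fun j => T ≤ v j := by
      rw [knockoffSelected, dif_pos h]
    set R : ℕ := (knockoffSelected q v).card with hR
    set A : ℕ := ((knockoffSelected q v ∩ H0)).card with hA
    set Vm : ℕ := (H0.filter fun j => ∃ t ∈ knockoffFeasible q v, v j ≤ -t).card with hVm
    have hRcount : ((univ : Finset (Fin m)).filter fun j => T ≤ v j).card = R := by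
      rw [hR, hsel]
    have hVmle : Vm ≤ ((univ : Finset (Fin m)).filter fun j => v j ≤ -T).card := by
      rw [hVm]
      have hsub : (H0.filter fun j => ∃ t ∈ knockoffFeasible q v, v j ≤ -t)
          ⊆ ((univ : Finset (Fin m)).filter fun j => v j ≤ -T) := by
        intro j hj
        obtain ⟨hjH, t, htf, hle⟩ := mem_filter.1 hj
        exact mem_filter.2 ⟨mem_univ _,
          le_trans hle (neg_le_neg (Finset.min'_le _ _ htf))⟩
      exact Finset.card_le_card hsub
    have hkey : (Vm : ℝ) ≤ q * R := by
      rcases Nat.eq_zero_or_pos R with hR0 | hR1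
      · rw [hRcount] at hcond
        rw [hR0] at hcond
        simp only [Nat.cast_zero, max_eq_left (by norm_num : (0:ℝ) ≤ 1), mul_one] at hcond
        have : (Vm : ℝ) < 1 := lt_of_le_of_lt (le_trans (Nat.cast_le.2 hVmle) hcond) hq1
        have : Vm = 0 := by exact_mod_cast Nat.lt_one_iff.1 (by exact_mod_cast this)
        rw [this, hR0]
        simp
      · rw [hRcount] at hcond
        have hmax : max (1:ℝ) (R:ℕ) = (R:ℝ) := by
          apply max_eq_right
          exact_mod_cast hR1
        rw [hmax] at hcond
        exact le_trans (Nat.cast_le.2 hVmle) hcond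
    have hd1 : (0:ℝ) < (R:ℝ) + 1/q := by positivity
    have hd2 : (0:ℝ) < 1 + (Vm:ℝ) := by positivity
    rw [gaux, ← hA, ← hVm, mul_div_assoc' q _ _]
    rw [div_le_div_iff₀ hd1 hd2]
    have hAnn : (0:ℝ) ≤ (A:ℝ) := Nat.cast_nonneg _
    have h1 : (A:ℝ) * (1 + Vm) = A + A * Vm := by ring
    have h2 : q * (A:ℝ) * ((R:ℝ) + 1/q) = q * A * R + A := by
      field_simp
    rw [h1, h2]
    have : (A:ℝ) * Vm ≤ (A:ℝ) * (q * R) := mul_le_mul_of_nonneg_left hkey hAnn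
    nlinarith
  · have hsel : knockoffSelected q v = ∅ := by
      rw [knockoffSelected, dif_neg h]
    rw [gaux, hsel]
    simp


section Meas

lemma meas_card_le (g : (Fin m → ℝ) → ℝ) (hg : Measurable g) :
    Measurable fun v : Fin m → ℝ => ((univ.filter fun i => v i ≤ g v).card : ℝ) := by
  classical
  have heq : (fun v : Fin m → ℝ => ((univ.filter fun i => v i ≤ g v).card : ℝ))
      = fun v => ∑ i : Fin m, if v i ≤ g v then (1:ℝ) else 0 := by
    funext v
    rw [Finset.card_filter]
    push_cast
    rfl
  rw [heq]
  apply Finset.measurable_sum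
  intro i _
  exact Measurable.ite (measurableSet_le (measurable_pi_apply i) hg)
    measurable_const measurable_const

lemma meas_card_ge (g : (Fin m → ℝ) → ℝ) (hg : Measurable g) :
    Measurable fun v : Fin m → ℝ => ((univ.filter fun i => g v ≤ v i).card : ℝ) := by
  classical
  have heq : (fun v : Fin m → ℝ => ((univ.filter fun i => g v ≤ v i).card : ℝ))
      = fun v => ∑ i : Fin m, if g v ≤ v i then (1:ℝ) else 0 := by
    funext v
    rw [Finset.card_filter]
    push_cast
    rfl
  rw [heq]
  apply Finset.measurable_sum
  intro i _
  exact Measurable.ite (measurableSet_le hg (measurable_pi_apply i))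
    measurable_const measurable_const

/-- the feasibility condition for candidate `|v j'|` as a measurable set -/
lemma meas_feasCond (q : ℝ) (j' : Fin m) :
    MeasurableSet {v : Fin m → ℝ | |v j'| ≠ 0 ∧
      (((univ.filter fun i => v i ≤ -|v j'|).card : ℝ))
        ≤ q * max 1 ((univ.filter fun i => |v j'| ≤ v i).card : ℝ)} := by
  classical
  have habs : Measurable fun v : Fin m → ℝ => |v j'| := (measurable_pi_apply j').abs
  have h1 : MeasurableSet {v : Fin m → ℝ | |v j'| ≠ 0} :=
    (habs (measurableSet_singleton 0)).compl
  have h2 : MeasurableSet {v : Fin m → ℝ |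
      (((univ.filter fun i => v i ≤ -|v j'|).card : ℝ))
        ≤ q * max 1 ((univ.filter fun i => |v j'| ≤ v i).card : ℝ)} := by
    apply measurableSet_le
    · exact meas_card_le _ habs.neg
    · exact (measurable_const.max (meas_card_ge _ habs)).const_mul q
  exact h1.inter h2

lemma mem_selected_iff (q : ℝ) (v : Fin m → ℝ) (j : Fin m) :
    j ∈ knockoffSelected q v ↔ ∃ j', (|v j'| ≠ 0 ∧
      (((univ.filter fun i => v i ≤ -|v j'|).card : ℝ))
        ≤ q * max 1 ((univ.filter fun i => |v j'| ≤ v i).card : ℝ)) ∧ |v j'| ≤ v j := by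
  classical
  by_cases h : (knockoffFeasible q v).Nonempty
  · rw [knockoffSelected, dif_pos h]
    simp only [mem_filter, mem_univ, true_and]
    constructor
    · intro hle
      have hmem := Finset.min'_mem _ h
      obtain ⟨⟨j', hj'⟩, hne, hcond⟩ := mem_feasible_iff.1 hmem
      refine ⟨j', ⟨?_, ?_⟩, ?_⟩ <;> rw [hj']
      · exact hne
      · exact hcond
      · exact hle
    · rintro ⟨j', ⟨hne, hcond⟩, hle⟩
      have hmem : |v j'| ∈ knockoffFeasible q v :=
        mem_feasible_iff.2 ⟨⟨j', rfl⟩, hne, hcond⟩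
      exact le_trans (Finset.min'_le _ _ hmem) hle
  · rw [knockoffSelected, dif_neg h]
    simp only [Finset.notMem_empty, false_iff]
    rintro ⟨j', ⟨hne, hcond⟩, _⟩
    exact h ⟨|v j'|, mem_feasible_iff.2 ⟨⟨j', rfl⟩, hne, hcond⟩⟩

lemma mem_s2_iff (q : ℝ) (v : Fin m → ℝ) (j : Fin m) :
    (∃ t ∈ knockoffFeasible q v, v j ≤ -t) ↔ ∃ j', (|v j'| ≠ 0 ∧
      (((univ.filter fun i => v i ≤ -|v j'|).card : ℝ))
        ≤ q * max 1 ((univ.filter fun i => |v j'| ≤ v i).card : ℝ)) ∧ v j ≤ -|v j'| := by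
  classical
  constructor
  · rintro ⟨t, htf, hle⟩
    obtain ⟨⟨j', hj'⟩, hne, hcond⟩ := mem_feasible_iff.1 htf
    refine ⟨j', ⟨?_, ?_⟩, ?_⟩ <;> rw [hj']
    · exact hne
    · exact hcond
    · exact hle
  · rintro ⟨j', ⟨hne, hcond⟩, hle⟩
    exact ⟨|v j'|, mem_feasible_iff.2 ⟨⟨j', rfl⟩, hne, hcond⟩, hle⟩

lemma meas_mem_selected (q : ℝ) (j : Fin m) :
    MeasurableSet {v : Fin m → ℝ | j ∈ knockoffSelected q v} := by
  classical
  have : {v : Fin m → ℝ | j ∈ knockoffSelected q v}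
      = ⋃ j' : Fin m, ({v : Fin m → ℝ | |v j'| ≠ 0 ∧
          (((univ.filter fun i => v i ≤ -|v j'|).card : ℝ))
            ≤ q * max 1 ((univ.filter fun i => |v j'| ≤ v i).card : ℝ)}
          ∩ {v : Fin m → ℝ | |v j'| ≤ v j}) := by
    ext v
    simp only [Set.mem_setOf_eq, Set.mem_iUnion, Set.mem_inter_iff, mem_selected_iff q v j]
  rw [this]
  refine MeasurableSet.iUnion fun j' => (meas_feasCond q j').inter ?_
  exact measurableSet_le (measurable_pi_apply j').abs (measurable_pi_apply j)

lemma meas_mem_s2 (q : ℝ) (j : Fin m) :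
    MeasurableSet {v : Fin m → ℝ | ∃ t ∈ knockoffFeasible q v, v j ≤ -t} := by
  classical
  have : {v : Fin m → ℝ | ∃ t ∈ knockoffFeasible q v, v j ≤ -t}
      = ⋃ j' : Fin m, ({v : Fin m → ℝ | |v j'| ≠ 0 ∧
          (((univ.filter fun i => v i ≤ -|v j'|).card : ℝ))
            ≤ q * max 1 ((univ.filter fun i => |v j'| ≤ v i).card : ℝ)}
          ∩ {v : Fin m → ℝ | v j ≤ -|v j'|}) := by
    ext v
    simp only [Set.mem_setOf_eq, Set.mem_iUnion, Set.mem_inter_iff, mem_s2_iff q v j]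
  rw [this]
  refine MeasurableSet.iUnion fun j' => (meas_feasCond q j').inter ?_
  exact measurableSet_le (measurable_pi_apply j) (measurable_pi_apply j').abs.neg

lemma meas_selCardH0 (q : ℝ) (H0 : Finset (Fin m)) :
    Measurable fun v : Fin m → ℝ => ((knockoffSelected q v ∩ H0).card : ℝ) := by
  classical
  have heq : (fun v : Fin m → ℝ => ((knockoffSelected q v ∩ H0).card : ℝ))
      = fun v => ∑ j ∈ H0, if j ∈ knockoffSelected q v then (1:ℝ) else 0 := by
    funext v
    rw [Finset.inter_comm, ← Finset.filter_mem_eq_inter, Finset.card_filter]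
    push_cast
    rfl
  rw [heq]
  exact Finset.measurable_sum _ fun j _ =>
    Measurable.ite (meas_mem_selected q j) measurable_const measurable_const

lemma meas_selCard (q : ℝ) :
    Measurable fun v : Fin m → ℝ => ((knockoffSelected q v).card : ℝ) := by
  classical
  have heq : (fun v : Fin m → ℝ => ((knockoffSelected q v).card : ℝ))
      = fun v => ∑ j : Fin m, if j ∈ knockoffSelected q v then (1:ℝ) else 0 := by
    funext v
    nth_rewrite 1 [show knockoffSelected q v
      = univ.filter (fun j => j ∈ knockoffSelected q v) by simp]
    rw [Finset.card_filter]
    push_cast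
    rfl
  rw [heq]
  exact Finset.measurable_sum _ fun j _ =>
    Measurable.ite (meas_mem_selected q j) measurable_const measurable_const

lemma meas_s2card (q : ℝ) (H0 : Finset (Fin m)) :
    Measurable fun v : Fin m → ℝ =>
      ((H0.filter fun j => ∃ t ∈ knockoffFeasible q v, v j ≤ -t).card : ℝ) := by
  classical
  have heq : (fun v : Fin m → ℝ =>
      ((H0.filter fun j => ∃ t ∈ knockoffFeasible q v, v j ≤ -t).card : ℝ))
      = fun v => ∑ j ∈ H0, if ∃ t ∈ knockoffFeasible q v, v j ≤ -t then (1:ℝ) else 0 := by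
    funext v
    rw [Finset.card_filter]
    push_cast
    rfl
  rw [heq]
  exact Finset.measurable_sum _ fun j _ =>
    Measurable.ite (meas_mem_s2 q j) measurable_const measurable_const

lemma meas_gaux (q : ℝ) (H0 : Finset (Fin m)) : Measurable (gaux q H0) := by
  unfold gaux
  exact (meas_selCardH0 q H0).div (measurable_const.add (meas_s2card q H0))

lemma gaux_nonneg (q : ℝ) (H0 : Finset (Fin m)) (v : Fin m → ℝ) : 0 ≤ gaux q H0 v := by
  unfold gaux
  positivity

lemma gaux_le (q : ℝ) (H0 : Finset (Fin m)) (v : Fin m → ℝ) : gaux q H0 v ≤ m := by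
  unfold gaux
  have h1 : ((knockoffSelected q v ∩ H0).card : ℝ) ≤ m := by
    have := Finset.card_le_univ (knockoffSelected q v ∩ H0)
    rw [Fintype.card_fin] at this
    exact_mod_cast this
  calc ((knockoffSelected q v ∩ H0).card : ℝ) /
        (1 + ((H0.filter fun j => ∃ t ∈ knockoffFeasible q v, v j ≤ -t).card : ℝ))
      ≤ ((knockoffSelected q v ∩ H0).card : ℝ) := by
        apply div_le_self (Nat.cast_nonneg _)
        have : (0:ℝ) ≤ ((H0.filter fun j => ∃ t ∈ knockoffFeasible q v, v j ≤ -t).card : ℝ) :=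
          Nat.cast_nonneg _
        linarith
    _ ≤ m := h1

end Meas

open Classical in
theorem sum_flip_le (q : ℝ) (H0 : Finset (Fin m)) (w : Fin m → ℝ) :
    ∑ S ∈ H0.powerset, gaux q H0 (flipV S w) ≤ 2 ^ H0.card := by
  classical
  obtain ⟨c, hc⟩ : ∃ c, H0.card = c := ⟨H0.card, rfl⟩
  set b : Fin c ↪o Fin m := H0.orderEmbOfFin hc with hb
  set τ : Equiv.Perm (Fin c) := Tuple.sort (fun i : Fin c => |w (b i)|) with hτ
  set ord : Fin c → Fin m := fun i => b (τ i) with hord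
  have hinj : Function.Injective ord := fun i j h => τ.injective (b.injective h)
  have himg : H0 = univ.image ord := by
    ext j
    simp only [Finset.mem_image, mem_univ, true_and]
    constructor
    · intro hj
      have hj' : j ∈ Set.range (H0.orderEmbOfFin hc) := by
        rw [Finset.range_orderEmbOfFin]
        exact hj
      obtain ⟨i, hi⟩ := hj'
      refine ⟨τ.symm i, ?_⟩
      rw [hord]
      simp only [Equiv.apply_symm_apply]
      exact hi
    · rintro ⟨i, rfl⟩
      exact Finset.orderEmbOfFin_mem _ _ _
  have hmono : Monotone (fun i : Fin c => |w (ord i)|) :=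
    Tuple.monotone_sort (fun i : Fin c => |w (b i)|)
  have hVnot : ∀ (ε : Fin c → Bool) (j : Fin m), j ∉ H0 → Vof w ord ε j = w j := by
    intro ε j hj
    refine Vof_notmem ε fun i hi => hj ?_
    rw [himg]
    exact Finset.mem_image.2 ⟨i, mem_univ _, hi⟩
  set Dm : ℝ → ℕ := fun t => ((univ : Finset (Fin m)).filter fun j => j ∉ H0 ∧ w j ≤ -t).card
    with hDm
  set Dp : ℝ → ℕ := fun t => ((univ : Finset (Fin m)).filter fun j => j ∉ H0 ∧ t ≤ w j).card
    with hDp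
  have hcard_ge : ∀ (ε : Fin c → Bool) (t : ℝ), 0 < t →
      ((univ : Finset (Fin m)).filter fun j => t ≤ Vof w ord ε j).card
        = Dp t + (univ.filter fun i : Fin c => t ≤ |w (ord i)| ∧ ε i = true).card := by
    intro ε t ht
    rw [card_split hinj himg]
    congr 1
    · rw [hDp]
      apply congrArg
      apply Finset.filter_congr
      intro j _
      exact and_congr_right fun hj => by rw [hVnot ε j hj]
    · apply congrArg
      apply Finset.filter_congr
      intro i _
      exact Vof_ord_ge hinj ε ht
  have hcard_le : ∀ (ε : Fin c → Bool) (t : ℝ), 0 < t →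
      ((univ : Finset (Fin m)).filter fun j => Vof w ord ε j ≤ -t).card
        = Dm t + (univ.filter fun i : Fin c => t ≤ |w (ord i)| ∧ ε i = false).card := by
    intro ε t ht
    rw [card_split hinj himg]
    congr 1
    · rw [hDm]
      apply congrArg
      apply Finset.filter_congr
      intro j _
      exact and_congr_right fun hj => by rw [hVnot ε j hj]
    · apply congrArg
      apply Finset.filter_congr
      intro i _
      exact Vof_ord_le hinj ε ht
  have hfeas : ∀ (ε : Fin c → Bool) (t : ℝ), t ∈ knockoffFeasible q (Vof w ord ε) ↔
      ((∃ j, |w j| = t) ∧ t ≠ 0 ∧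
        (((Dm t + (univ.filter fun i : Fin c => t ≤ |w (ord i)| ∧ ε i = false).card : ℕ) : ℝ))
          ≤ q * max 1 (((Dp t
            + (univ.filter fun i : Fin c => t ≤ |w (ord i)| ∧ ε i = true).card : ℕ) : ℝ))) := by
    intro ε t
    rw [mem_feasible_iff]
    have habs : (∃ j, |Vof w ord ε j| = t) ↔ ∃ j, |w j| = t := by
      constructor
      · rintro ⟨j, hj⟩
        exact ⟨j, by rwa [Vof_abs] at hj⟩
      · rintro ⟨j, hj⟩
        exact ⟨j, by rwa [Vof_abs]⟩
    have hpos : (∃ j, |w j| = t) → t ≠ 0 → 0 < t := by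
      rintro ⟨j, hj⟩ hne
      rcases (hj ▸ abs_nonneg (w j)).lt_or_eq with h' | h'
      · exact h'
      · exact absurd h'.symm hne
    constructor
    · rintro ⟨hex, hne, hcond⟩
      have hex' := habs.1 hex
      have ht := hpos hex' hne
      refine ⟨hex', hne, ?_⟩
      rw [hcard_le ε t ht, hcard_ge ε t ht] at hcond
      exact hcond
    · rintro ⟨hex, hne, hcond⟩
      have ht := hpos hex hne
      refine ⟨habs.2 hex, hne, ?_⟩
      rw [hcard_le ε t ht, hcard_ge ε t ht]
      exact hcond
  set σf : (Fin c → Bool) → ℕ := fun ε =>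
    if h : (knockoffFeasible q (Vof w ord ε)).Nonempty then
      (univ.filter fun i : Fin c =>
        |w (ord i)| < (knockoffFeasible q (Vof w ord ε)).min' h).card
    else c with hσf
  have hσle : ∀ ε, σf ε ≤ c := by
    intro ε
    simp only [hσf]
    split
    · exact le_trans (Finset.card_filter_le _ _) (by simp)
    · exact le_refl c
  have hlowset : ∀ (T : ℝ) (i j : Fin c), i ≤ j →
      j ∈ (univ.filter fun i : Fin c => |w (ord i)| < T) →
      i ∈ (univ.filter fun i : Fin c => |w (ord i)| < T) := by
    intro T i j hij hj
    exact mem_filter.2 ⟨mem_univ _, lt_of_le_of_lt (hmono hij) (mem_filter.1 hj).2⟩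
  have hmagiff : ∀ (T : ℝ) (i : Fin c),
      (|w (ord i)| < T ↔ (i : ℕ) < (univ.filter fun i : Fin c => |w (ord i)| < T).card) := by
    intro T i
    have := lower_char _ (hlowset T) i
    simpa only [mem_filter, mem_univ, true_and] using this
  have hσmem : ∀ (ε : Fin c → Bool) (h : (knockoffFeasible q (Vof w ord ε)).Nonempty)
      (i : Fin c), (σf ε ≤ (i:ℕ)
        ↔ (knockoffFeasible q (Vof w ord ε)).min' h ≤ |w (ord i)|) := by
    intro ε h i
    simp only [hσf, dif_pos h]
    have hiff := hmagiff ((knockoffFeasible q (Vof w ord ε)).min' h) i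
    constructor
    · intro hle
      by_contra hlt
      have := hiff.1 (not_le.1 hlt)
      omega
    · intro hge
      by_contra hlt
      have := hiff.2 (by omega)
      exact absurd hge (not_le.2 this)
  have hpay : ∀ ε : Fin c → Bool, gaux q H0 (Vof w ord ε) = MM ε (σf ε) := by
    intro ε
    by_cases h : (knockoffFeasible q (Vof w ord ε)).Nonempty
    · set T := (knockoffFeasible q (Vof w ord ε)).min' h with hT
      have hTmem : T ∈ knockoffFeasible q (Vof w ord ε) := Finset.min'_mem _ h
      have hT0 : 0 < T := feasible_pos hTmem
      have hsel : knockoffSelected q (Vof w ord ε)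
          = univ.filter fun j => T ≤ Vof w ord ε j := by
        rw [knockoffSelected, dif_pos h]
      have hnum : (knockoffSelected q (Vof w ord ε) ∩ H0)
          = H0.filter fun j => T ≤ Vof w ord ε j := by
        rw [hsel]
        ext j
        simp only [mem_inter, mem_filter, mem_univ, true_and]
        tauto
      have hnum2 : (knockoffSelected q (Vof w ord ε) ∩ H0).card = cnt ε (σf ε) true := by
        rw [hnum, card_split_H0 hinj himg, cnt]
        apply congrArg
        apply Finset.filter_congr
        intro i _
        rw [Vof_ord_ge hinj ε hT0]
        exact and_congr_left fun _ => (hσmem ε h i).symm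
      have hden2 : (H0.filter fun j =>
          ∃ t ∈ knockoffFeasible q (Vof w ord ε), Vof w ord ε j ≤ -t).card
            = cnt ε (σf ε) false := by
        have hden : (H0.filter fun j =>
            ∃ t ∈ knockoffFeasible q (Vof w ord ε), Vof w ord ε j ≤ -t)
              = H0.filter fun j => Vof w ord ε j ≤ -T := by
          apply Finset.filter_congr
          intro j _
          constructor
          · rintro ⟨t, htf, hle⟩
            exact le_trans hle (neg_le_neg (Finset.min'_le _ _ htf))
          · intro hle
            exact ⟨T, hTmem, hle⟩
        rw [hden, card_split_H0 hinj himg, cnt]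
        apply congrArg
        apply Finset.filter_congr
        intro i _
        rw [Vof_ord_le hinj ε hT0]
        exact and_congr_left fun _ => (hσmem ε h i).symm
      rw [gaux, hnum2, hden2, MM]
    · have hsel : knockoffSelected q (Vof w ord ε) = ∅ := by
        rw [knockoffSelected, dif_neg h]
      have hσc : σf ε = c := by simp only [hσf, dif_neg h]
      have hcnt : cnt ε c true = 0 := by
        rw [cnt, card_eq_zero, filter_eq_empty_iff]
        intro i _
        rintro ⟨hci, _⟩
        exact absurd hci (not_le.2 i.isLt)
      rw [gaux, hsel, MM, hσc, hcnt]
      simp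
  have hadapt : ∀ s : ℕ, s < c → ∀ ε ε' : Fin c → Bool,
      (∀ i : Fin c, (i:ℕ) < s → ε i = ε' i) →
      cnt ε s true = cnt ε' s true → (σf ε ≤ s ↔ σf ε' ≤ s) := by
    intro s hs ε ε' hag hcnteq
    have hsplitcnt : ∀ η : Fin c → Bool, cnt η s true + cnt η s false
        = (univ.filter fun i : Fin c => s ≤ (i:ℕ)).card := by
      intro η
      rw [cnt, cnt]
      rw [show (univ.filter fun i : Fin c => s ≤ (i:ℕ) ∧ η i = true)
          = (univ.filter fun i : Fin c => s ≤ (i:ℕ)).filter (fun i => η i = true) by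
            rw [Finset.filter_filter]]
      rw [show (univ.filter fun i : Fin c => s ≤ (i:ℕ) ∧ η i = false)
          = (univ.filter fun i : Fin c => s ≤ (i:ℕ)).filter (fun i => ¬ (η i = true)) by
            rw [Finset.filter_filter]
            apply Finset.filter_congr
            intro i _
            simp]
      exact Finset.card_filter_add_card_filter_not ..
    have hcnteq' : cnt ε s false = cnt ε' s false := by
      have h1 := hsplitcnt ε
      have h2 := hsplitcnt ε'
      omega
    have hcc : ∀ (t : ℝ) (bb : Bool), 0 < t → t ≤ |w (ord ⟨s, hs⟩)| →
        (univ.filter fun i : Fin c => t ≤ |w (ord i)| ∧ ε i = bb).card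
          = (univ.filter fun i : Fin c => t ≤ |w (ord i)| ∧ ε' i = bb).card := by
      intro t bb ht hts
      have hsplitf : ∀ η : Fin c → Bool,
          (univ.filter fun i : Fin c => t ≤ |w (ord i)| ∧ η i = bb)
            = (univ.filter fun i : Fin c => (i:ℕ) < s ∧ t ≤ |w (ord i)| ∧ η i = bb)
              ∪ (univ.filter fun i : Fin c => s ≤ (i:ℕ) ∧ η i = bb) := by
        intro η
        ext i
        simp only [mem_filter, mem_union, mem_univ, true_and]
        constructor
        · rintro ⟨h1, h2⟩
          rcases lt_or_ge (i:ℕ) s with h' | h'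
          · exact Or.inl ⟨h', h1, h2⟩
          · exact Or.inr ⟨h', h2⟩
        · rintro (⟨_, h1, h2⟩ | ⟨h1, h2⟩)
          · exact ⟨h1, h2⟩
          · refine ⟨le_trans hts (hmono ?_), h2⟩
            exact h1
      have hdisj : ∀ η η' : Fin c → Bool,
          Disjoint (univ.filter fun i : Fin c => (i:ℕ) < s ∧ t ≤ |w (ord i)| ∧ η i = bb)
            (univ.filter fun i : Fin c => s ≤ (i:ℕ) ∧ η' i = bb) := by
        intro η η'
        rw [Finset.disjoint_left]
        intro a ha hb
        have h1 := (mem_filter.1 ha).2.1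
        have h2 := (mem_filter.1 hb).2.1
        omega
      rw [hsplitf ε, hsplitf ε', Finset.card_union_of_disjoint (hdisj ε ε),
        Finset.card_union_of_disjoint (hdisj ε' ε')]
      congr 1
      · apply congrArg
        apply Finset.filter_congr
        intro i _
        constructor
        · rintro ⟨h1, h2, h3⟩
          exact ⟨h1, h2, (hag i h1) ▸ h3⟩
        · rintro ⟨h1, h2, h3⟩
          exact ⟨h1, h2, (hag i h1).symm ▸ h3⟩
      · cases bb
        · exact hcnteq'
        · exact hcnteq
    have hchar : ∀ η : Fin c → Bool, (σf η ≤ s ↔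
        ∃ t ∈ knockoffFeasible q (Vof w ord η), t ≤ |w (ord ⟨s, hs⟩)|) := by
      intro η
      by_cases h : (knockoffFeasible q (Vof w ord η)).Nonempty
      · have := hσmem η h ⟨s, hs⟩
        constructor
        · intro hle
          exact ⟨_, Finset.min'_mem _ h, this.1 hle⟩
        · rintro ⟨t, htf, hts⟩
          exact this.2 (le_trans (Finset.min'_le _ _ htf) hts)
      · simp only [hσf, dif_neg h]
        constructor
        · intro hle
          omega
        · rintro ⟨t, htf, _⟩
          exact absurd ⟨t, htf⟩ h
    rw [hchar ε, hchar ε']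
    constructor
    · rintro ⟨t, htf, hts⟩
      have ht0 : 0 < t := feasible_pos htf
      refine ⟨t, ?_, hts⟩
      rw [hfeas] at htf ⊢
      obtain ⟨hex, hne, hcond⟩ := htf
      refine ⟨hex, hne, ?_⟩
      rw [← hcc t false ht0 hts, ← hcc t true ht0 hts]
      exact hcond
    · rintro ⟨t, htf, hts⟩
      have ht0 : 0 < t := feasible_pos htf
      refine ⟨t, ?_, hts⟩
      rw [hfeas] at htf ⊢
      obtain ⟨hex, hne, hcond⟩ := htf
      refine ⟨hex, hne, ?_⟩
      rw [hcc t false ht0 hts, hcc t true ht0 hts]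
      exact hcond
  have hbij : ∑ S ∈ H0.powerset, gaux q H0 (flipV S w)
      = ∑ ε : Fin c → Bool, gaux q H0 (Vof w ord ε) := by
    refine Finset.sum_nbij' (fun S => εof w ord S) (fun ε => Sof w ord ε) ?_ ?_ ?_ ?_ ?_
    · intro S _
      exact mem_univ _
    · intro ε _
      exact Finset.mem_powerset.2 (Sof_subset himg ε)
    · intro S hS
      exact Sof_εof hinj himg (Finset.mem_powerset.1 hS)
    · intro ε _
      exact εof_Sof hinj ε
    · intro S hS
      rw [Vof, Sof_εof hinj himg (Finset.mem_powerset.1 hS)]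
  rw [hbij]
  calc ∑ ε : Fin c → Bool, gaux q H0 (Vof w ord ε)
      = ∑ ε : Fin c → Bool, MM ε (σf ε) := Finset.sum_congr rfl fun ε _ => hpay ε
    _ ≤ (2:ℝ)^c := lemA σf hσle hadapt
    _ = 2 ^ H0.card := by rw [hc]

end KnockAux

open KnockAux

/-- Modified FDR control for the knockoff filter: under the i.i.d. symmetric null
sign condition (flipping signs of any subset of null coordinates leaves the joint
law invariant), the expected ratio `#(Ŝ ∩ H₀) / (|Ŝ| + 1/q)` is at most `q`. -/
theorem knockoff_mfdr_control {Ω : Type*} [MeasurableSpace Ω]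
    (μ : Measure Ω) [IsProbabilityMeasure μ]
    (W : Ω → Fin m → ℝ) (hW : Measurable W) (H0 : Finset (Fin m))
    (hsign : ∀ ε : Fin m → ℝ, (∀ j, ε j = 1 ∨ ε j = -1) →
      (∀ j ∉ H0, ε j = 1) →
      μ.map (fun ω => fun j => ε j * W ω j) = μ.map W)
    (q : ℝ) (hq0 : 0 < q) (hq1 : q < 1) :
    ∫ ω, ((knockoffSelected q (W ω) ∩ H0).card : ℝ) /
        (((knockoffSelected q (W ω)).card : ℝ) + 1 / q) ∂μ ≤ q := by
  classical
  set F : (Fin m → ℝ) → ℝ := fun v => ((knockoffSelected q v ∩ H0).card : ℝ) /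
      (((knockoffSelected q v).card : ℝ) + 1/q) with hF
  have hFm : Measurable F := (meas_selCardH0 q H0).div ((meas_selCard q).add measurable_const)
  have hGm : Measurable (gaux q H0) := meas_gaux q H0
  have hF0 : ∀ v, 0 ≤ F v := by
    intro v
    rw [hF]
    have : (0:ℝ) < 1/q := by positivity
    have h2 : (0:ℝ) ≤ ((knockoffSelected q v).card : ℝ) := Nat.cast_nonneg _
    positivity
  have hFb : ∀ v, F v ≤ q * m := by
    intro v
    rw [hF]
    have hnum : ((knockoffSelected q v ∩ H0).card : ℝ) ≤ m := by
      have := Finset.card_le_univ (knockoffSelected q v ∩ H0)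
      rw [Fintype.card_fin] at this
      exact_mod_cast this
    have h1q : (0:ℝ) < 1/q := by positivity
    have h2 : (0:ℝ) ≤ ((knockoffSelected q v).card : ℝ) := Nat.cast_nonneg _
    calc ((knockoffSelected q v ∩ H0).card : ℝ) /
          (((knockoffSelected q v).card : ℝ) + 1/q)
        ≤ ((knockoffSelected q v ∩ H0).card : ℝ) / (1/q) := by
          apply div_le_div_of_nonneg_left (Nat.cast_nonneg _) h1q
          linarith
      _ = q * ((knockoffSelected q v ∩ H0).card : ℝ) := by
          field_simp
      _ ≤ q * m := mul_le_mul_of_nonneg_left hnum hq0.le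
  -- integrability
  have hintF : Integrable (fun ω => F (W ω)) μ := by
    refine Integrable.mono' (integrable_const (q * m)) ((hFm.comp hW).aestronglyMeasurable) ?_
    filter_upwards with ω
    rw [Real.norm_eq_abs, abs_of_nonneg (hF0 _)]
    exact hFb _
  have hintG : Integrable (fun ω => gaux q H0 (W ω)) μ := by
    refine Integrable.mono' (integrable_const (m:ℝ)) ((hGm.comp hW).aestronglyMeasurable) ?_
    filter_upwards with ω
    rw [Real.norm_eq_abs, abs_of_nonneg (gaux_nonneg q H0 _)]
    exact gaux_le q H0 _
  -- key: ∫ gaux ≤ 1 via sign symmetry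
  have hkey : ∫ ω, gaux q H0 (W ω) ∂μ ≤ 1 := by
    set ν := μ.map W with hν
    haveI : IsProbabilityMeasure ν := Measure.isProbabilityMeasure_map hW.aemeasurable
    have hflipmeas : ∀ S : Finset (Fin m), Measurable (flipV (m := m) S) := by
      intro S
      apply measurable_pi_lambda
      intro j
      exact (measurable_pi_apply j).const_mul _
    have hmapint : ∫ ω, gaux q H0 (W ω) ∂μ = ∫ v, gaux q H0 v ∂ν := by
      rw [hν, integral_map hW.aemeasurable hGm.aestronglyMeasurable]
    have hinv : ∀ S ∈ H0.powerset, ∫ v, gaux q H0 (flipV S v) ∂ν = ∫ v, gaux q H0 v ∂ν := by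
      intro S hS
      have hmap : ν.map (flipV S) = ν := by
        rw [hν, Measure.map_map (hflipmeas S) hW]
        have hcomp : flipV S ∘ W = fun ω => fun j => (if j ∈ S then (-1:ℝ) else 1) * W ω j :=
          rfl
        rw [hcomp]
        exact hsign (fun j => if j ∈ S then -1 else 1)
          (fun j => by by_cases hj : j ∈ S <;> simp [hj])
          (fun j hj => if_neg (fun hmem => hj (Finset.mem_powerset.1 hS hmem)))
      conv_rhs => rw [← hmap]
      rw [integral_map (hflipmeas S).aemeasurable hGm.aestronglyMeasurable]
    have hintGS : ∀ S : Finset (Fin m), Integrable (fun v => gaux q H0 (flipV S v)) ν := by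
      intro S
      refine Integrable.mono' (integrable_const (m:ℝ))
        ((hGm.comp (hflipmeas S)).aestronglyMeasurable) ?_
      filter_upwards with v
      rw [Real.norm_eq_abs, abs_of_nonneg (gaux_nonneg q H0 _)]
      exact gaux_le q H0 _
    have hsum : (2:ℝ)^H0.card * ∫ v, gaux q H0 v ∂ν
        = ∑ S ∈ H0.powerset, ∫ v, gaux q H0 (flipV S v) ∂ν := by
      rw [Finset.sum_congr rfl hinv, Finset.sum_const, Finset.card_powerset, nsmul_eq_mul]
      push_cast
      ring
    have hswap : ∑ S ∈ H0.powerset, ∫ v, gaux q H0 (flipV S v) ∂ν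
        = ∫ v, ∑ S ∈ H0.powerset, gaux q H0 (flipV S v) ∂ν :=
      (integral_finset_sum _ (fun S _ => hintGS S)).symm
    have hle : ∫ v, ∑ S ∈ H0.powerset, gaux q H0 (flipV S v) ∂ν
        ≤ ∫ _v : Fin m → ℝ, ((2:ℝ)^H0.card) ∂ν := by
      refine integral_mono (integrable_finset_sum _ (fun S _ => hintGS S))
        (integrable_const _) ?_
      intro v
      exact sum_flip_le q H0 v
    have hconst : ∫ _v : Fin m → ℝ, ((2:ℝ)^H0.card) ∂ν = (2:ℝ)^H0.card := by
      simp
    have h2pos : (0:ℝ) < 2^H0.card := by positivity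
    rw [hmapint]
    nlinarith [hsum, hswap, hle, hconst]
  calc ∫ ω, ((knockoffSelected q (W ω) ∩ H0).card : ℝ) /
        (((knockoffSelected q (W ω)).card : ℝ) + 1 / q) ∂μ
      = ∫ ω, F (W ω) ∂μ := rfl
    _ ≤ ∫ ω, q * gaux q H0 (W ω) ∂μ := by
        refine integral_mono hintF (hintG.const_mul q) ?_
        intro ω
        exact det_le hq0 hq1 H0 (W ω)
    _ = q * ∫ ω, gaux q H0 (W ω) ∂μ := by rw [integral_const_mul]
    _ ≤ q * 1 := mul_le_mul_of_nonneg_left hkey hq0.le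
    _ = q := mul_one q
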